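/- Let μ and ν be partitions with n parts and let (λ, ρ) = (λ(μ,ν), ρ(μ,ν)) be the image of (μ, ν) under the *-operation. Then λ and ρ are again partitions with n parts (i.e., weakly decreasing sequences of nonnegative integers), and |λ| + |ρ| = |μ| + |ν|. -/

import Mathlib

/-- A partition with `n` (possibly zero) parts: a weakly decreasing sequence of
nonnegative integers, recorded 0-indexed, vanishing from index `n` on. -/
def IsPartitionN (n : ℕ) (μ : ℕ → ℕ) : Prop :=
  Antitone μ ∧ ∀ i, n ≤ i → μ i = 0

/-- A partition (finitely many nonzero parts), 0-indexed. -/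
def IsPartition (μ : ℕ → ℕ) : Prop :=
  Antitone μ ∧ ∃ N, ∀ i, N ≤ i → μ i = 0

/-- `λ(μ,ν)_k = μ_k − k + #{j : 1 ≤ j ≤ n, ν_j − j ≥ μ_k − k}`, 0-indexed,
so the (k+1)-st part of `λ(μ,ν)`, as an integer. -/
def lamStar (n : ℕ) (μ ν : ℕ → ℕ) (k : ℕ) : ℤ :=
  (μ k : ℤ) - (k + 1) +
    ((Finset.range n).filter (fun j => (μ k : ℤ) - (k + 1) ≤ (ν j : ℤ) - (j + 1))).card

/-- `ρ(μ,ν)_j = ν_j − j + 1 + #{k : 1 ≤ k ≤ n, μ_k − k > ν_j − j}`, 0-indexed. -/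
def rhoStar (n : ℕ) (μ ν : ℕ → ℕ) (j : ℕ) : ℤ :=
  (ν j : ℤ) - (j + 1) + 1 +
    ((Finset.range n).filter (fun k => (ν j : ℤ) - (j + 1) < (μ k : ℤ) - (k + 1))).card

/-- `λ(μ,ν)` as a sequence of natural numbers. -/
def lamStarN (n : ℕ) (μ ν : ℕ → ℕ) (k : ℕ) : ℕ := (lamStar n μ ν k).toNat

/-- `ρ(μ,ν)` as a sequence of natural numbers. -/
def rhoStarN (n : ℕ) (μ ν : ℕ → ℕ) (k : ℕ) : ℕ := (rhoStar n μ ν k).toNat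

/-- The conjugate partition: `μ′_i = #{k : μ_k ≥ i}` (1-indexed), recorded 0-indexed. -/
noncomputable def conjP (μ : ℕ → ℕ) (i : ℕ) : ℕ := {k : ℕ | i + 1 ≤ μ k}.ncard

/-- Remove a full column of height `k`: subtract 1 from the first `k` parts. -/
def removeCol (k : ℕ) (σ : ℕ → ℕ) : ℕ → ℕ := fun j => if j < k then σ j - 1 else σ j

/-- An LR filling of the skew shape `θ/ν` of type `μ` (all 0-indexed; cell `(i,j)`
is row `i+1`, column `j+1`; the entry `0` marks cells outside the skew shape).
Rows weakly increase, columns strictly increase, the entry `m+1` occurs `μ m`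
times, and the reverse reading word (rows top to bottom, each row right to left)
is a lattice permutation. It is required that `ν ⊆ θ`. -/
def IsLRFilling (θ ν μ : ℕ → ℕ) (T : ℕ → ℕ → ℕ) : Prop :=
  (∀ i, ν i ≤ θ i) ∧
  (∀ i j, ν i ≤ j → j < θ i → 1 ≤ T i j) ∧
  (∀ i j, ¬(ν i ≤ j ∧ j < θ i) → T i j = 0) ∧
  (∀ i j j', ν i ≤ j → j ≤ j' → j' < θ i → T i j ≤ T i j') ∧
  (∀ i i' j, i < i' → ν i ≤ j → j < θ i → ν i' ≤ j → j < θ i' → T i j < T i' j) ∧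
  (∀ m : ℕ, {p : ℕ × ℕ | T p.1 p.2 = m + 1}.ncard = μ m) ∧
  (∀ m i j : ℕ,
    {p : ℕ × ℕ | T p.1 p.2 = m + 2 ∧ (p.1 < i ∨ (p.1 = i ∧ j ≤ p.2))}.ncard ≤
    {p : ℕ × ℕ | T p.1 p.2 = m + 1 ∧ (p.1 < i ∨ (p.1 = i ∧ j ≤ p.2))}.ncard)

/-- The Littlewood–Richardson coefficient `c_{μν}^θ`: the number of LR fillings
of `θ/ν` of type `μ` (equal to `0` when `ν ⊄ θ`). -/
noncomputable def lrCoeff (μ ν θ : ℕ → ℕ) : ℕ := Nat.card {T : ℕ → ℕ → ℕ // IsLRFilling θ ν μ T}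

private lemma count_between (n : ℕ) (b : ℕ → ℤ) (hb : StrictAnti b) (A B : ℤ) (hAB : A ≤ B)
    (P : ℕ → Prop) [DecidablePred P] (hP : ∀ j, P j → A ≤ b j ∧ b j < B) :
    (((Finset.range n).filter P).card : ℤ) ≤ B - A := by
  have h1 : ((Finset.range n).filter P).card ≤ (Finset.Ico A B).card := by
    apply Finset.card_le_card_of_injOn b
    · intro x hx
      simp only [Finset.mem_coe, Finset.mem_filter] at hx
      exact Finset.mem_Ico.mpr (hP x hx.2)
    · exact hb.injective.injOn
  calc (((Finset.range n).filter P).card : ℤ) ≤ ((Finset.Ico A B).card : ℤ) := by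
        exact_mod_cast h1
    _ = B - A := by rw [Int.card_Ico]; exact Int.toNat_of_nonneg (by omega)

private lemma gauss_sum (n : ℕ) : (2:ℤ) * ∑ k ∈ Finset.range n, ((k:ℤ)+1) = n*n + n := by
  induction n with
  | zero => simp
  | succ m ih =>
    rw [Finset.sum_range_succ]
    push_cast
    linarith [ih]

/-- The image `(λ,ρ)` of a pair `(μ,ν)` of partitions with `n` parts under the
`*`-operation again consists of two partitions with `n` parts, and
`|λ| + |ρ| = |μ| + |ν|`. -/
theorem star_image_is_partition_pair (n : ℕ) (μ ν : ℕ → ℕ)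
    (hμ : IsPartitionN n μ) (hν : IsPartitionN n ν) :
    (∀ k, k < n → 0 ≤ lamStar n μ ν k) ∧
    (∀ i j, i ≤ j → j < n → lamStar n μ ν j ≤ lamStar n μ ν i) ∧
    (∀ k, k < n → 0 ≤ rhoStar n μ ν k) ∧
    (∀ i j, i ≤ j → j < n → rhoStar n μ ν j ≤ rhoStar n μ ν i) ∧
    ((∑ k ∈ Finset.range n, lamStar n μ ν k) + ∑ k ∈ Finset.range n, rhoStar n μ ν k)
      = (∑ k ∈ Finset.range n, (μ k : ℤ)) + ∑ k ∈ Finset.range n, (ν k : ℤ) := by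
  obtain ⟨hμa, hμ0⟩ := hμ
  obtain ⟨hνa, hν0⟩ := hν
  have hbanti : StrictAnti (fun j : ℕ => (ν j : ℤ) - (j + 1)) := by
    apply strictAnti_nat_of_succ_lt
    intro m
    have := hνa (by omega : m ≤ m + 1)
    push_cast
    omega
  have haanti : StrictAnti (fun k : ℕ => (μ k : ℤ) - (k + 1)) := by
    apply strictAnti_nat_of_succ_lt
    intro m
    have := hμa (by omega : m ≤ m + 1)
    push_cast
    omega
  refine ⟨?_, ?_, ?_, ?_, ?_⟩
  · -- λ nonneg
    intro k hk
    have hsub : Finset.range (k + 1 - μ k) ⊆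
        (Finset.range n).filter (fun j => (μ k : ℤ) - (k + 1) ≤ (ν j : ℤ) - (j + 1)) := by
      intro j hj
      simp only [Finset.mem_range] at hj
      simp only [Finset.mem_filter, Finset.mem_range]
      constructor
      · omega
      · have : (0:ℤ) ≤ (ν j : ℤ) := Int.natCast_nonneg _
        omega
    have hcard := Finset.card_le_card hsub
    simp only [Finset.card_range] at hcard
    unfold lamStar
    omega
  · -- λ antitone
    intro i j hij hjn
    have haij : (μ j : ℤ) - (j + 1) ≤ (μ i : ℤ) - (i + 1) := by
      have := hμa hij
      omega
    have hsplit : ((Finset.range n).filter (fun l => (μ j : ℤ) - (j + 1) ≤ (ν l : ℤ) - (l + 1))).card ≤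
        ((Finset.range n).filter (fun l => (μ i : ℤ) - (i + 1) ≤ (ν l : ℤ) - (l + 1))).card +
        ((Finset.range n).filter
          (fun l => (μ j : ℤ) - (j + 1) ≤ (ν l : ℤ) - (l + 1) ∧ (ν l : ℤ) - (l + 1) < (μ i : ℤ) - (i + 1))).card := by
      refine le_trans (Finset.card_le_card ?_) (Finset.card_union_le _ _)
      intro l hl
      simp only [Finset.mem_filter, Finset.mem_union] at hl ⊢
      rcases le_or_gt ((μ i : ℤ) - (i + 1)) ((ν l : ℤ) - (l + 1)) with h | h
      · exact Or.inl ⟨hl.1, h⟩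
      · exact Or.inr ⟨hl.1, hl.2, h⟩
    have hmid := count_between n (fun j : ℕ => (ν j : ℤ) - (j + 1)) hbanti
      ((μ j : ℤ) - (j + 1)) ((μ i : ℤ) - (i + 1)) haij
      (fun l => (μ j : ℤ) - (j + 1) ≤ (ν l : ℤ) - (l + 1) ∧ (ν l : ℤ) - (l + 1) < (μ i : ℤ) - (i + 1))
      (fun l h => h)
    unfold lamStar
    omega
  · -- ρ nonneg
    intro j hj
    have hsub : Finset.range (j - ν j) ⊆
        (Finset.range n).filter (fun k => (ν j : ℤ) - (j + 1) < (μ k : ℤ) - (k + 1)) := by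
      intro k hk
      simp only [Finset.mem_range] at hk
      simp only [Finset.mem_filter, Finset.mem_range]
      constructor
      · omega
      · have : (0:ℤ) ≤ (μ k : ℤ) := Int.natCast_nonneg _
        omega
    have hcard := Finset.card_le_card hsub
    simp only [Finset.card_range] at hcard
    unfold rhoStar
    omega
  · -- ρ antitone
    intro i j hij hjn
    have hbij : (ν j : ℤ) - (j + 1) ≤ (ν i : ℤ) - (i + 1) := by
      have := hνa hij
      omega
    have hsplit : ((Finset.range n).filter (fun l => (ν j : ℤ) - (j + 1) < (μ l : ℤ) - (l + 1))).card ≤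
        ((Finset.range n).filter (fun l => (ν i : ℤ) - (i + 1) < (μ l : ℤ) - (l + 1))).card +
        ((Finset.range n).filter
          (fun l => (ν j : ℤ) - (j + 1) + 1 ≤ (μ l : ℤ) - (l + 1) ∧ (μ l : ℤ) - (l + 1) < (ν i : ℤ) - (i + 1) + 1)).card := by
      refine le_trans (Finset.card_le_card ?_) (Finset.card_union_le _ _)
      intro l hl
      simp only [Finset.mem_filter, Finset.mem_union] at hl ⊢
      rcases le_or_gt ((μ l : ℤ) - (l + 1)) ((ν i : ℤ) - (i + 1)) with h | h
      · exact Or.inr ⟨hl.1, by omega, by omega⟩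
      · exact Or.inl ⟨hl.1, by omega⟩
    have hmid := count_between n (fun k : ℕ => (μ k : ℤ) - (k + 1)) haanti
      ((ν j : ℤ) - (j + 1) + 1) ((ν i : ℤ) - (i + 1) + 1) (by omega)
      (fun l => (ν j : ℤ) - (j + 1) + 1 ≤ (μ l : ℤ) - (l + 1) ∧ (μ l : ℤ) - (l + 1) < (ν i : ℤ) - (i + 1) + 1)
      (fun l h => h)
    unfold rhoStar
    omega
  · -- the sum identity
    have hcards : (∑ k ∈ Finset.range n,
          ((Finset.range n).filter (fun j => (μ k : ℤ) - (k + 1) ≤ (ν j : ℤ) - (j + 1))).card)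
        + (∑ j ∈ Finset.range n,
          ((Finset.range n).filter (fun k => (ν j : ℤ) - (j + 1) < (μ k : ℤ) - (k + 1))).card)
        = n * n := by
      simp only [Finset.card_filter]
      rw [Finset.sum_comm (s := Finset.range n) (t := Finset.range n)
        (f := fun j k => if (ν j : ℤ) - (j + 1) < (μ k : ℤ) - (k + 1) then 1 else 0)]
      rw [← Finset.sum_add_distrib]
      have : ∀ k ∈ Finset.range n,
          ((∑ j ∈ Finset.range n, if (μ k : ℤ) - (k + 1) ≤ (ν j : ℤ) - (j + 1) then 1 else 0)
          + ∑ j ∈ Finset.range n, if (ν j : ℤ) - (j + 1) < (μ k : ℤ) - (k + 1) then 1 else 0) = n := by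
        intro k _
        rw [← Finset.sum_add_distrib]
        have : ∀ j ∈ Finset.range n,
            ((if (μ k : ℤ) - (k + 1) ≤ (ν j : ℤ) - (j + 1) then 1 else 0)
            + if (ν j : ℤ) - (j + 1) < (μ k : ℤ) - (k + 1) then 1 else 0) = 1 := by
          intro j _
          split_ifs with h1 h2 <;> omega
        rw [Finset.sum_congr rfl this, Finset.sum_const, Finset.card_range, smul_eq_mul, mul_one]
      rw [Finset.sum_congr rfl this, Finset.sum_const, Finset.card_range, smul_eq_mul]
    unfold lamStar rhoStar
    rw [Finset.sum_add_distrib, Finset.sum_add_distrib]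
    have hc : ((∑ k ∈ Finset.range n,
          (((Finset.range n).filter (fun j => (μ k : ℤ) - (k + 1) ≤ (ν j : ℤ) - (j + 1))).card : ℤ))
        + ∑ j ∈ Finset.range n,
          (((Finset.range n).filter (fun k => (ν j : ℤ) - (j + 1) < (μ k : ℤ) - (k + 1))).card : ℤ))
        = (n : ℤ) * n := by
      exact_mod_cast hcards
    have h1 : ∑ k ∈ Finset.range n, ((μ k : ℤ) - (k + 1))
        = (∑ k ∈ Finset.range n, (μ k : ℤ)) - ∑ k ∈ Finset.range n, ((k : ℤ) + 1) :=
      Finset.sum_sub_distrib _ _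
    have h2 : ∑ j ∈ Finset.range n, ((ν j : ℤ) - (j + 1) + 1)
        = (∑ j ∈ Finset.range n, (ν j : ℤ)) - (∑ j ∈ Finset.range n, ((j : ℤ) + 1)) + n := by
      rw [Finset.sum_add_distrib, Finset.sum_sub_distrib, Finset.sum_const, Finset.card_range]
      simp
    rw [h1, h2]
    have hg := gauss_sum n
    linarith [hc, hg]
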